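/- Let F(u, u_t, u_x) = (γ₁u² + γ₂u_t² + γ₃u_x² + γ₄u_tu_x)u + (γ₅u² + γ₆u_t² + γ₇u_x²)u_t + (γ₈u² + γ₉u_t² + γ₁₀u_x²)u_x with real constants γ₁,…,γ₁₀, and define K_F(z) = (i/2π)∫₀^{2π} F(cosθ, -cosh z sinθ, sinh z sinθ)e^{-iθ}dθ. Then Re K_F(z) = -(cosh z/8)(γ₅ + 3γ₆cosh²z + 3γ₇sinh²z) + (sinh z/8)(γ₈ + 3γ₉cosh²z + 3γ₁₀sinh²z). -/

import Mathlib

open intervalIntegral Real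

lemma exp_neg_I_mul (θ : ℝ) :
    Complex.exp (-(Complex.I * θ)) =
      (Real.cos θ : ℂ) - (Real.sin θ : ℂ) * Complex.I := by
  rw [show -(Complex.I * θ) = ((-θ : ℝ) : ℂ) * Complex.I by push_cast; ring,
    Complex.exp_mul_I, ← Complex.ofReal_cos, ← Complex.ofReal_sin,
    Real.cos_neg, Real.sin_neg]
  push_cast
  ring

lemma main_aux (f : ℝ → ℝ) (hf : Continuous f) :
    ((Complex.I / (2 * Real.pi)) *
      ∫ θ in (0:ℝ)..(2 * Real.pi), (f θ : ℂ) * Complex.exp (-(Complex.I * θ))).re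
    = (∫ θ in (0:ℝ)..(2 * Real.pi), f θ * Real.sin θ) / (2 * Real.pi) := by
  have hint : (∫ θ in (0:ℝ)..(2 * Real.pi), (f θ : ℂ) * Complex.exp (-(Complex.I * θ)))
      = ((∫ θ in (0:ℝ)..(2 * Real.pi), f θ * Real.cos θ : ℝ) : ℂ)
        - ((∫ θ in (0:ℝ)..(2 * Real.pi), f θ * Real.sin θ : ℝ) : ℂ) * Complex.I := by
    have h1 : (∫ θ in (0:ℝ)..(2 * Real.pi), (f θ : ℂ) * Complex.exp (-(Complex.I * θ)))
        = ∫ θ in (0:ℝ)..(2 * Real.pi),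
            (((f θ * Real.cos θ : ℝ) : ℂ) - ((f θ * Real.sin θ : ℝ) : ℂ) * Complex.I) := by
      apply intervalIntegral.integral_congr
      intro θ _
      simp only [exp_neg_I_mul]
      push_cast
      ring
    rw [h1, intervalIntegral.integral_sub, intervalIntegral.integral_mul_const,
      intervalIntegral.integral_ofReal, intervalIntegral.integral_ofReal]
    · apply Continuous.intervalIntegrable; fun_prop
    · apply Continuous.intervalIntegrable; fun_prop
  rw [hint]
  set A := (∫ θ in (0:ℝ)..(2 * Real.pi), f θ * Real.cos θ)
  set B := (∫ θ in (0:ℝ)..(2 * Real.pi), f θ * Real.sin θ)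
  have : Complex.I / (2 * Real.pi) * ((A : ℂ) - (B : ℂ) * Complex.I)
      = ((B / (2 * Real.pi) : ℝ) : ℂ) + ((A / (2 * Real.pi) : ℝ) : ℂ) * Complex.I := by
    have hπ : ((Real.pi : ℂ)) ≠ 0 := by exact_mod_cast Real.pi_ne_zero
    push_cast
    field_simp
    linear_combination (-(B:ℂ)) * Complex.I_sq
  rw [this, Complex.add_re, Complex.ofReal_re, Complex.mul_I_re, Complex.ofReal_im]
  ring

theorem stmt_7 (γ₁ γ₂ γ₃ γ₄ γ₅ γ₆ γ₇ γ₈ γ₉ γ₁₀ : ℝ) (z : ℝ) :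
    ((Complex.I / (2 * Real.pi)) *
      ∫ θ in (0:ℝ)..(2 * Real.pi),
        (((γ₁ * Real.cos θ ^ 2 + γ₂ * (-(Real.cosh z) * Real.sin θ) ^ 2
            + γ₃ * (Real.sinh z * Real.sin θ) ^ 2
            + γ₄ * (-(Real.cosh z) * Real.sin θ) * (Real.sinh z * Real.sin θ)) * Real.cos θ
          + (γ₅ * Real.cos θ ^ 2 + γ₆ * (-(Real.cosh z) * Real.sin θ) ^ 2
            + γ₇ * (Real.sinh z * Real.sin θ) ^ 2) * (-(Real.cosh z) * Real.sin θ)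
          + (γ₈ * Real.cos θ ^ 2 + γ₉ * (-(Real.cosh z) * Real.sin θ) ^ 2
            + γ₁₀ * (Real.sinh z * Real.sin θ) ^ 2) * (Real.sinh z * Real.sin θ) : ℝ) : ℂ) *
          Complex.exp (-(Complex.I * (θ : ℂ)))).re
    = -(Real.cosh z / 8) * (γ₅ + 3 * γ₆ * Real.cosh z ^ 2 + 3 * γ₇ * Real.sinh z ^ 2)
      + (Real.sinh z / 8) * (γ₈ + 3 * γ₉ * Real.cosh z ^ 2 + 3 * γ₁₀ * Real.sinh z ^ 2) := by
  set ch := Real.cosh z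
  set sh := Real.sinh z
  set f : ℝ → ℝ := fun θ =>
    ((γ₁ * Real.cos θ ^ 2 + γ₂ * (-ch * Real.sin θ) ^ 2
        + γ₃ * (sh * Real.sin θ) ^ 2
        + γ₄ * (-ch * Real.sin θ) * (sh * Real.sin θ)) * Real.cos θ
      + (γ₅ * Real.cos θ ^ 2 + γ₆ * (-ch * Real.sin θ) ^ 2
        + γ₇ * (sh * Real.sin θ) ^ 2) * (-ch * Real.sin θ)
      + (γ₈ * Real.cos θ ^ 2 + γ₉ * (-ch * Real.sin θ) ^ 2
        + γ₁₀ * (sh * Real.sin θ) ^ 2) * (sh * Real.sin θ)) with hfdef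
  have hf : Continuous f := by fun_prop
  rw [main_aux f hf]
  -- compute the real integral
  have h30 : (∫ θ in (0:ℝ)..(2*Real.pi), Real.sin θ * Real.cos θ ^ 3) = 0 := by
    have := @integral_sin_pow_odd_mul_cos_pow 0 (2*Real.pi) 0 3
    simpa using this
  have h13 : (∫ θ in (0:ℝ)..(2*Real.pi), Real.sin θ ^ 3 * Real.cos θ) = 0 := by
    have := @integral_sin_pow_mul_cos_pow_odd 0 (2*Real.pi) 3 0
    simpa [Real.sin_two_pi] using this
  have h22 : (∫ θ in (0:ℝ)..(2*Real.pi), Real.sin θ ^ 2 * Real.cos θ ^ 2) = Real.pi / 4 := by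
    rw [integral_sin_sq_mul_cos_sq]
    have hs : Real.sin (4 * (2 * Real.pi)) = 0 := by
      rw [show (4:ℝ) * (2 * Real.pi) = (8:ℕ) * Real.pi by push_cast; ring,
        Real.sin_nat_mul_pi]
    rw [hs]
    simp
    ring
  have h4 : (∫ θ in (0:ℝ)..(2*Real.pi), Real.sin θ ^ 4) = 3 * Real.pi / 4 := by
    have := @integral_sin_pow 0 (2*Real.pi) 2
    norm_num [Real.sin_two_pi] at this
    rw [this]
    ring
  have key : (∫ θ in (0:ℝ)..(2*Real.pi), f θ * Real.sin θ)
      = γ₁ * (∫ θ in (0:ℝ)..(2*Real.pi), Real.sin θ * Real.cos θ ^ 3)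
        + (γ₂ * ch^2 + γ₃ * sh^2 - γ₄ * ch * sh) *
            (∫ θ in (0:ℝ)..(2*Real.pi), Real.sin θ ^ 3 * Real.cos θ)
        + (-(ch * γ₅) + sh * γ₈) *
            (∫ θ in (0:ℝ)..(2*Real.pi), Real.sin θ ^ 2 * Real.cos θ ^ 2)
        + (-(ch * (γ₆ * ch^2 + γ₇ * sh^2)) + sh * (γ₉ * ch^2 + γ₁₀ * sh^2)) *
            (∫ θ in (0:ℝ)..(2*Real.pi), Real.sin θ ^ 4) := by
    rw [← intervalIntegral.integral_const_mul, ← intervalIntegral.integral_const_mul,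
      ← intervalIntegral.integral_const_mul, ← intervalIntegral.integral_const_mul,
      ← intervalIntegral.integral_add, ← intervalIntegral.integral_add,
      ← intervalIntegral.integral_add]
    · apply intervalIntegral.integral_congr
      intro θ _
      simp only [hfdef]
      ring
    all_goals apply Continuous.intervalIntegrable; fun_prop
  rw [key, h30, h13, h22, h4]
  have hπ : Real.pi ≠ 0 := Real.pi_ne_zero
  field_simp
  ring
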